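/- Let 0 < d < 2 and K > 1 be real numbers, let t₀ ∈ (0,1), and let ε : (0, t₀) → (0, ∞) be a continuous function such that t ↦ t^d·ε(t) is nondecreasing on (0, t₀), ε(t) → 0 as t → 0⁺, and for every α > 0 one has t^α/ε(t) → 0 as t → 0⁺. Then there exist t₁ ∈ (0, t₀], a constant C > 0, and a continuous strictly increasing function ε̃ : (0, t₁) → (0, ∞) such that: ε(t) ≤ ε̃(t) for all t ∈ (0, t₁); ε̃(t) → 0 as t → 0⁺; for every α > 0, t^α/ε̃(t) → 0 as t → 0⁺; the function t ↦ ε̃(t)^{1/(2−d)}/t is nonincreasing on (0, t₁); and ε̃(t) ≤ C·ε̃(t^K) for all t ∈ (0, t₁). -/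

import Mathlib

open Set Filter Topology

/-- Lemma 4.3: given `0 < d < 2`, `K > 1`, `t₀ ∈ (0,1)` and a continuous
`ε : (0,t₀) → (0,∞)` with `t ↦ t^d·ε(t)` nondecreasing, `ε(t) → 0` as `t → 0⁺`, and
`t^α/ε(t) → 0` as `t → 0⁺` for all `α > 0`, there exist `t₁ ∈ (0,t₀]`, a constant `C > 0`
and a continuous strictly increasing `ε̃ : (0,t₁) → (0,∞)` with `ε ≤ ε̃`, `ε̃(t) → 0`,
`t^α/ε̃(t) → 0` for all `α > 0`, `t ↦ ε̃(t)^(1/(2-d))/t` nonincreasing, and the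
logarithmic-type condition `ε̃(t) ≤ C·ε̃(t^K)` on `(0,t₁)`. -/
theorem stmt9 (d K t₀ : ℝ) (hd0 : 0 < d) (hd2 : d < 2) (hK : 1 < K)
    (ht₀0 : 0 < t₀) (ht₀1 : t₀ < 1)
    (ε : ℝ → ℝ) (hεcont : ContinuousOn ε (Ioo 0 t₀))
    (hεpos : ∀ t ∈ Ioo 0 t₀, 0 < ε t)
    (hmono : MonotoneOn (fun t => t ^ d * ε t) (Ioo 0 t₀))
    (hlim : Tendsto ε (𝓝[>] 0) (𝓝 0))
    (hsmall : ∀ α : ℝ, 0 < α → Tendsto (fun t => t ^ α / ε t) (𝓝[>] 0) (𝓝 0)) :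
    ∃ t₁ : ℝ, 0 < t₁ ∧ t₁ ≤ t₀ ∧
      ∃ C : ℝ, 0 < C ∧
        ∃ εt : ℝ → ℝ,
          ContinuousOn εt (Ioo 0 t₁) ∧
          StrictMonoOn εt (Ioo 0 t₁) ∧
          (∀ t ∈ Ioo 0 t₁, 0 < εt t) ∧
          (∀ t ∈ Ioo 0 t₁, ε t ≤ εt t) ∧
          Tendsto εt (𝓝[>] 0) (𝓝 0) ∧
          (∀ α : ℝ, 0 < α → Tendsto (fun t => t ^ α / εt t) (𝓝[>] 0) (𝓝 0)) ∧
          AntitoneOn (fun t => εt t ^ (1 / (2 - d)) / t) (Ioo 0 t₁) ∧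
          (∀ t ∈ Ioo 0 t₁, εt t ≤ C * εt (t ^ K)) := by
  have hd2' : (0 : ℝ) < 2 - d := by linarith
  have hK0 : (0 : ℝ) < K := by linarith
  set x₀ : ℝ := -Real.log t₀ with hx₀def
  set x₂ : ℝ := max x₀ (1 / (2 - d)) + 1 with hx₂def
  have hx₂a : 1 / (2 - d) < x₂ := by
    rw [hx₂def]; have h := le_max_right x₀ (1 / (2 - d)); linarith
  have hx₂b : x₀ < x₂ := by
    rw [hx₂def]; have h := le_max_left x₀ (1 / (2 - d)); linarith
  have hx₂pos : 0 < x₂ := lt_trans (by positivity) hx₂a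
  have hx₂d : ∀ x : ℝ, x₂ ≤ x → 1 / x ≤ 2 - d := by
    intro x hx
    have hxp : 0 < x := lt_of_lt_of_le hx₂pos hx
    have h1 : 1 / (2 - d) < x := lt_of_lt_of_le hx₂a hx
    rw [div_lt_iff₀ hd2'] at h1
    rw [div_le_iff₀ hxp]
    nlinarith
  set t₁ : ℝ := Real.exp (-x₂) with ht₁def
  have ht₁0 : 0 < t₁ := Real.exp_pos _
  have ht₁t₀ : t₁ < t₀ := by
    have h : t₁ < Real.exp (-x₀) := Real.exp_lt_exp.2 (by linarith)
    rw [hx₀def, neg_neg, Real.exp_log ht₀0] at h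
    exact h
  have hmemt : ∀ t : ℝ, t ∈ Ioo 0 t₁ → x₂ < -Real.log t := by
    intro t ht
    have h := Real.log_lt_log ht.1 ht.2
    rw [ht₁def, Real.log_exp] at h
    linarith
  have hmemz : ∀ z : ℝ, x₂ < z → Real.exp (-z) ∈ Ioo 0 t₁ :=
    fun z hz => ⟨Real.exp_pos _, Real.exp_lt_exp.2 (by linarith)⟩
  have hsub : Ioo (0:ℝ) t₁ ⊆ Ioo 0 t₀ := fun s hs => ⟨hs.1, lt_trans hs.2 ht₁t₀⟩
  -- a global bound for ε on (0, t₁)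
  obtain ⟨u, hu0, hu⟩ : ∃ u, 0 < u ∧ ∀ t ∈ Ioo (0:ℝ) u, ε t < 1 := by
    have h1 : {t : ℝ | ε t < 1} ∈ 𝓝[>] (0:ℝ) := hlim.eventually (gt_mem_nhds one_pos)
    obtain ⟨w, hw, hsub'⟩ := mem_nhdsGT_iff_exists_Ioo_subset.1 h1
    exact ⟨w, hw, fun t ht => hsub' ht⟩
  obtain ⟨Mc, hMc⟩ : ∃ Mc, ∀ s ∈ Icc u t₁, ‖ε s‖ ≤ Mc := by
    apply IsCompact.exists_bound_of_continuousOn isCompact_Icc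
    exact hεcont.mono (fun s hs => ⟨lt_of_lt_of_le hu0 hs.1, lt_of_le_of_lt hs.2 ht₁t₀⟩)
  set M : ℝ := max Mc 1 with hMdef
  have hM1 : (1:ℝ) ≤ M := le_max_right _ _
  have hM0 : (0:ℝ) < M := lt_of_lt_of_le one_pos hM1
  have hεM : ∀ s ∈ Ioo (0:ℝ) t₁, ε s ≤ M := by
    intro s hs
    rcases lt_or_ge s u with h | h
    · exact le_trans (le_of_lt (hu s ⟨hs.1, h⟩)) hM1
    · have h2 := hMc s ⟨h, le_of_lt hs.2⟩
      rw [Real.norm_eq_abs] at h2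
      calc ε s ≤ |ε s| := le_abs_self _
        _ ≤ Mc := h2
        _ ≤ M := le_max_left _ _
  -- ψ and φ
  set ψ : ℝ → ℝ := fun z => ε (Real.exp (-z)) with hψdef
  have hψpos : ∀ z, x₂ < z → 0 < ψ z := fun z hz => hεpos _ (hsub (hmemz z hz))
  have hψM : ∀ z, x₂ < z → ψ z ≤ M := fun z hz => hεM _ (hmemz z hz)
  set φ : ℝ → ℝ := fun x => sSup ((fun z => ψ z * min 1 (z / x)) '' Ioi x₂) with hφdef
  have hSne : ∀ x : ℝ, ((fun z => ψ z * min 1 (z / x)) '' Ioi x₂).Nonempty :=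
    fun x => ⟨_, ⟨x₂ + 1, by simp only [mem_Ioi]; linarith, rfl⟩⟩
  have htermle : ∀ x z : ℝ, 0 < x → x₂ < z → ψ z * min 1 (z / x) ≤ M := by
    intro x z hx hz
    have hz0 : 0 < z := lt_trans hx₂pos hz
    have h1 : min 1 (z / x) ≤ 1 := min_le_left _ _
    have h2 : 0 ≤ min 1 (z / x) := le_min zero_le_one (by positivity)
    calc ψ z * min 1 (z / x) ≤ M * 1 := mul_le_mul (hψM z hz) h1 h2 (le_of_lt hM0)
      _ = M := mul_one M
  have hSbdd : ∀ x : ℝ, 0 < x → BddAbove ((fun z => ψ z * min 1 (z / x)) '' Ioi x₂) := by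
    intro x hx
    exact ⟨M, by rintro _ ⟨z, hz, rfl⟩; exact htermle x z hx hz⟩
  have hφleM : ∀ x : ℝ, 0 < x → φ x ≤ M := by
    intro x hx
    exact csSup_le (hSne x) (by rintro _ ⟨z, hz, rfl⟩; exact htermle x z hx hz)
  have hψφ : ∀ x, x₂ < x → ψ x ≤ φ x := by
    intro x hx
    have hx0 : (x:ℝ) ≠ 0 := ne_of_gt (lt_trans hx₂pos hx)
    have h1 : ψ x * min 1 (x / x) = ψ x := by rw [div_self hx0, min_self, mul_one]
    have h2 : ψ x * min 1 (x / x) ≤ φ x := le_csSup (hSbdd x (lt_trans hx₂pos hx))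
      (Set.mem_image_of_mem (fun z => ψ z * min 1 (z / x)) (mem_Ioi.2 hx))
    rw [h1] at h2
    exact h2
  have hφpos : ∀ x, x₂ < x → 0 < φ x := fun x hx => lt_of_lt_of_le (hψpos x hx) (hψφ x hx)
  have hφanti : ∀ x y : ℝ, x₂ < x → x ≤ y → φ y ≤ φ x := by
    intro x y hx hxy
    have hx0 : 0 < x := lt_trans hx₂pos hx
    apply csSup_le (hSne y)
    rintro _ ⟨z, hz, rfl⟩
    have hz0 : (0:ℝ) ≤ z := le_of_lt (lt_trans hx₂pos hz)
    have h1 : z / y ≤ z / x := div_le_div_of_nonneg_left hz0 hx0 hxy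
    have h2 : ψ z * min 1 (z / y) ≤ ψ z * min 1 (z / x) :=
      mul_le_mul_of_nonneg_left (min_le_min le_rfl h1) (le_of_lt (hψpos z hz))
    exact le_trans h2 (le_csSup (hSbdd x hx0)
      (Set.mem_image_of_mem (fun z => ψ z * min 1 (z / x)) hz))
  -- exponential growth lemma
  have hgrow : ∀ x y : ℝ, x₂ ≤ x → x ≤ y → y / x ≤ Real.exp ((2 - d) * (y - x)) := by
    intro x y hx hxy
    have hx0 : 0 < x := lt_of_lt_of_le hx₂pos hx
    have h1 : y / x = (y - x) / x + 1 := by field_simp; ring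
    have hd' := hx₂d x hx
    have h2 : (y - x) / x ≤ (2 - d) * (y - x) := by
      rw [div_eq_mul_one_div]
      calc (y - x) * (1 / x) ≤ (y - x) * (2 - d) :=
            mul_le_mul_of_nonneg_left hd' (by linarith)
        _ = (2 - d) * (y - x) := mul_comm _ _
    calc y / x = (y - x) / x + 1 := h1
      _ ≤ (2 - d) * (y - x) + 1 := by linarith
      _ ≤ Real.exp ((2 - d) * (y - x)) := Real.add_one_le_exp _
  have hmingrow : ∀ x y z : ℝ, x₂ < x → x ≤ y → x₂ < z →
      min 1 (z / x) ≤ min 1 (z / y) * Real.exp ((2 - d) * (y - x)) := by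
    intro x y z hx hxy hz
    have hx0 : 0 < x := lt_trans hx₂pos hx
    have hy0 : 0 < y := lt_of_lt_of_le hx0 hxy
    have hz0 : 0 < z := lt_trans hx₂pos hz
    have hexp1 : 1 ≤ Real.exp ((2 - d) * (y - x)) := Real.one_le_exp (by nlinarith)
    rcases le_or_gt y z with h | h
    · rw [min_eq_left ((one_le_div hy0).2 h)]
      rw [one_mul]
      exact le_trans (min_le_left _ _) hexp1
    · have hzy : z / y ≤ 1 := (div_le_one hy0).2 (le_of_lt h)
      rw [min_eq_right hzy]
      have hyx := hgrow x y (le_of_lt hx) hxy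
      rcases le_or_gt z x with h2 | h2
      · have hzx : z / x ≤ 1 := (div_le_one hx0).2 h2
        rw [min_eq_right hzx]
        calc z / x = z / y * (y / x) := by field_simp
          _ ≤ z / y * Real.exp ((2 - d) * (y - x)) :=
              mul_le_mul_of_nonneg_left hyx (by positivity)
      · calc min 1 (z / x) ≤ 1 := min_le_left _ _
          _ = x / y * (y / x) := by field_simp
          _ ≤ x / y * Real.exp ((2 - d) * (y - x)) :=
              mul_le_mul_of_nonneg_left hyx (by positivity)
          _ ≤ z / y * Real.exp ((2 - d) * (y - x)) := by
              have hxz : x / y ≤ z / y := by gcongr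
              exact mul_le_mul_of_nonneg_right hxz (Real.exp_pos _).le
  have hφgrow : ∀ x y : ℝ, x₂ < x → x ≤ y → φ x ≤ φ y * Real.exp ((2 - d) * (y - x)) := by
    intro x y hx hxy
    have hy : x₂ < y := lt_of_lt_of_le hx hxy
    apply csSup_le (hSne x)
    rintro _ ⟨z, hz, rfl⟩
    calc ψ z * min 1 (z / x)
        ≤ ψ z * (min 1 (z / y) * Real.exp ((2 - d) * (y - x))) :=
          mul_le_mul_of_nonneg_left (hmingrow x y z hx hxy hz) (hψpos z hz).le
      _ = ψ z * min 1 (z / y) * Real.exp ((2 - d) * (y - x)) := by ring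
      _ ≤ φ y * Real.exp ((2 - d) * (y - x)) := by
          apply mul_le_mul_of_nonneg_right _ (Real.exp_pos _).le
          exact le_csSup (hSbdd y (lt_trans hx₂pos hy))
            (Set.mem_image_of_mem (fun z => ψ z * min 1 (z / y)) hz)
  have hφK : ∀ x : ℝ, x₂ < x → φ x ≤ K * φ (K * x) := by
    intro x hx
    have hx0 : 0 < x := lt_trans hx₂pos hx
    have hKx0 : 0 < K * x := by positivity
    apply csSup_le (hSne x)
    rintro _ ⟨z, hz, rfl⟩
    have hz0 : 0 < z := lt_trans hx₂pos hz
    have hmin : min 1 (z / x) ≤ K * min 1 (z / (K * x)) := by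
      rcases le_or_gt (K * x) z with h | h
      · rw [min_eq_left ((one_le_div hKx0).2 h)]
        calc min 1 (z / x) ≤ 1 := min_le_left _ _
          _ ≤ K * 1 := by linarith
      · rw [min_eq_right ((div_le_one hKx0).2 h.le)]
        calc min 1 (z / x) ≤ z / x := min_le_right _ _
          _ = K * (z / (K * x)) := by field_simp
    calc ψ z * min 1 (z / x) ≤ ψ z * (K * min 1 (z / (K * x))) :=
          mul_le_mul_of_nonneg_left hmin (hψpos z hz).le
      _ = K * (ψ z * min 1 (z / (K * x))) := by ring
      _ ≤ K * φ (K * x) := by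
          apply mul_le_mul_of_nonneg_left _ hK0.le
          exact le_csSup (hSbdd _ hKx0)
            (Set.mem_image_of_mem (fun z => ψ z * min 1 (z / (K * x))) hz)
  -- φ tends to 0
  have hφ0 : ∀ δ : ℝ, 0 < δ → ∃ X : ℝ, x₂ < X ∧ ∀ x, X ≤ x → φ x ≤ δ / 2 := by
    intro δ hδ
    obtain ⟨v, hv0, hv⟩ : ∃ v, 0 < v ∧ ∀ t ∈ Ioo (0:ℝ) v, ε t < δ / 2 := by
      have h1 : {t : ℝ | ε t < δ / 2} ∈ 𝓝[>] (0:ℝ) :=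
        hlim.eventually (gt_mem_nhds (by linarith))
      obtain ⟨w, hw, hsub'⟩ := mem_nhdsGT_iff_exists_Ioo_subset.1 h1
      exact ⟨w, hw, fun t ht => hsub' ht⟩
    set Z : ℝ := max (x₂ + 1) (-Real.log v + 1) with hZdef
    have hZx₂ : x₂ < Z := lt_of_lt_of_le (by linarith) (le_max_left _ _)
    have hZ0 : 0 < Z := lt_trans hx₂pos hZx₂
    have hZψ : ∀ z : ℝ, Z ≤ z → ψ z < δ / 2 := by
      intro z hzZ
      apply hv
      refine ⟨Real.exp_pos _, ?_⟩
      have h2 : -Real.log v < z :=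
        lt_of_lt_of_le (by linarith [le_max_right (x₂ + 1) (-Real.log v + 1)]) hzZ
      calc Real.exp (-z) < Real.exp (Real.log v) := Real.exp_lt_exp.2 (by linarith)
        _ = v := Real.exp_log hv0
    refine ⟨max Z (2 * M * Z / δ), lt_of_lt_of_le hZx₂ (le_max_left _ _), ?_⟩
    intro x hx
    have hxZ : Z ≤ x := le_trans (le_max_left _ _) hx
    have hx0 : 0 < x := lt_of_lt_of_le hZ0 hxZ
    apply csSup_le (hSne x)
    rintro _ ⟨z, hz, rfl⟩
    have hz0 : 0 < z := lt_trans hx₂pos hz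
    rcases le_or_gt Z z with h | h
    · calc ψ z * min 1 (z / x) ≤ ψ z * 1 :=
            mul_le_mul_of_nonneg_left (min_le_left _ _) (hψpos z hz).le
        _ = ψ z := mul_one _
        _ ≤ δ / 2 := (hZψ z h).le
    · have h1 : min 1 (z / x) ≤ Z / x := by
        refine le_trans (min_le_right _ _) ?_
        gcongr
      have h2 : 0 ≤ min 1 (z / x) := le_min zero_le_one (by positivity)
      calc ψ z * min 1 (z / x) ≤ M * (Z / x) :=
            mul_le_mul (hψM z hz) h1 h2 hM0.le
        _ ≤ δ / 2 := by
            have hx2 : 2 * M * Z / δ ≤ x := le_trans (le_max_right _ _) hx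
            rw [div_le_iff₀ hδ] at hx2
            rw [mul_div_assoc', div_le_iff₀ hx0]
            nlinarith
  clear_value x₀ x₂ t₁ M ψ φ
  -- continuity of φ
  have hφcontAt : ∀ a : ℝ, x₂ < a → ContinuousAt φ a := by
    intro a ha
    have ha0 : 0 < a := lt_trans hx₂pos ha
    have hkey : ∀ᶠ x in 𝓝 a, ‖φ x - φ a‖ ≤ M * (Real.exp ((2 - d) * |x - a|) - 1) := by
      have hop : ∀ᶠ x in 𝓝 a, x ∈ Ioi x₂ := isOpen_Ioi.eventually_mem (mem_Ioi.2 ha)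
      filter_upwards [hop] with x hx
      rw [mem_Ioi] at hx
      have hx0 : 0 < x := lt_trans hx₂pos hx
      rw [Real.norm_eq_abs]
      rcases le_total x a with hxa | hxa
      · have h1 : φ a ≤ φ x := hφanti x a hx hxa
        have h2 : φ x ≤ φ a * Real.exp ((2 - d) * (a - x)) := hφgrow x a hx hxa
        have habs : |x - a| = a - x := by rw [abs_sub_comm]; exact abs_of_nonneg (by linarith)
        rw [abs_of_nonneg (by linarith), habs]
        have hφaM : φ a ≤ M := hφleM a ha0
        have hexp1 : 1 ≤ Real.exp ((2 - d) * (a - x)) :=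
          Real.one_le_exp (mul_nonneg (by linarith) (by linarith))
        calc φ x - φ a ≤ φ a * Real.exp ((2 - d) * (a - x)) - φ a := by linarith
          _ = φ a * (Real.exp ((2 - d) * (a - x)) - 1) := by ring
          _ ≤ M * (Real.exp ((2 - d) * (a - x)) - 1) :=
              mul_le_mul_of_nonneg_right hφaM (by linarith)
      · have h1 : φ x ≤ φ a := hφanti a x ha hxa
        have h2 : φ a ≤ φ x * Real.exp ((2 - d) * (x - a)) := hφgrow a x ha hxa
        have habs : |x - a| = x - a := abs_of_nonneg (by linarith)
        rw [abs_of_nonpos (by linarith), habs]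
        have hφxM : φ x ≤ M := hφleM x hx0
        have hexp1 : 1 ≤ Real.exp ((2 - d) * (x - a)) :=
          Real.one_le_exp (mul_nonneg (by linarith) (by linarith))
        calc -(φ x - φ a) = φ a - φ x := by ring
          _ ≤ φ x * Real.exp ((2 - d) * (x - a)) - φ x := by linarith
          _ = φ x * (Real.exp ((2 - d) * (x - a)) - 1) := by ring
          _ ≤ M * (Real.exp ((2 - d) * (x - a)) - 1) :=
              mul_le_mul_of_nonneg_right hφxM (by linarith)
    have hg0 : Tendsto (fun x : ℝ => M * (Real.exp ((2 - d) * |x - a|) - 1)) (𝓝 a) (𝓝 0) := by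
      have hc : Continuous (fun x : ℝ => M * (Real.exp ((2 - d) * |x - a|) - 1)) := by
        fun_prop
      have h0 : M * (Real.exp ((2 - d) * |a - a|) - 1) = 0 := by simp
      have := hc.tendsto a
      rw [h0] at this
      exact this
    have h1 : Tendsto (fun x => φ x - φ a) (𝓝 a) (𝓝 0) := squeeze_zero_norm' hkey hg0
    have h2 := h1.add_const (φ a)
    simp only [sub_add_cancel, zero_add] at h2
    exact h2
  -- the final function
  set εf : ℝ → ℝ := fun t => φ (-Real.log t) + (-Real.log t)⁻¹ with hεfdef
  have hεfpos : ∀ t ∈ Ioo (0:ℝ) t₁, 0 < εf t := by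
    intro t ht
    have hx := hmemt t ht
    have h0 : 0 < -Real.log t := lt_trans hx₂pos hx
    exact add_pos (hφpos _ hx) (by positivity)
  have hεεf : ∀ t ∈ Ioo (0:ℝ) t₁, ε t ≤ εf t := by
    intro t ht
    have hx := hmemt t ht
    have h0 : 0 < -Real.log t := lt_trans hx₂pos hx
    have h1 : ψ (-Real.log t) = ε t := by
      simp only [hψdef, neg_neg, Real.exp_log ht.1]
    calc ε t = ψ (-Real.log t) := h1.symm
      _ ≤ φ (-Real.log t) := hψφ _ hx
      _ ≤ εf t := le_add_of_nonneg_right (by positivity)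
  have hεfmono : StrictMonoOn εf (Ioo 0 t₁) := by
    intro s hs t ht hst
    have hxs := hmemt s hs
    have hxt := hmemt t ht
    have hlog : Real.log s < Real.log t := Real.log_lt_log hs.1 hst
    have h1 : φ (-Real.log s) ≤ φ (-Real.log t) := hφanti _ _ hxt (by linarith)
    have h2 : (-Real.log s)⁻¹ < (-Real.log t)⁻¹ :=
      inv_strictAnti₀ (lt_trans hx₂pos hxt) (by linarith)
    exact add_lt_add_of_le_of_lt h1 h2
  have hεfK : ∀ t ∈ Ioo (0:ℝ) t₁, εf t ≤ K * εf (t ^ K) := by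
    intro t ht
    have hx := hmemt t ht
    have hx0 : 0 < -Real.log t := lt_trans hx₂pos hx
    have hlog : -Real.log (t ^ K) = K * (-Real.log t) := by
      rw [Real.log_rpow ht.1]; ring
    have h1 : φ (-Real.log t) ≤ K * φ (K * (-Real.log t)) := hφK _ hx
    have h2 : (-Real.log t)⁻¹ = K * (K * (-Real.log t))⁻¹ := by
      rw [mul_inv]
      rw [← mul_assoc, mul_inv_cancel₀ (ne_of_gt hK0), one_mul]
    show φ (-Real.log t) + (-Real.log t)⁻¹ ≤
      K * (φ (-Real.log (t ^ K)) + (-Real.log (t ^ K))⁻¹)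
    rw [hlog, mul_add]
    exact add_le_add h1 (le_of_eq h2)
  -- the F inequality (for the antitone condition)
  have hF : ∀ x y : ℝ, x₂ < x → x ≤ y →
      (φ x + x⁻¹) * Real.exp ((2 - d) * x) ≤ (φ y + y⁻¹) * Real.exp ((2 - d) * y) := by
    intro x y hx hxy
    have hx0 : 0 < x := lt_trans hx₂pos hx
    have hy0 : 0 < y := lt_of_lt_of_le hx0 hxy
    have hE : Real.exp ((2 - d) * (y - x)) * Real.exp ((2 - d) * x) =
        Real.exp ((2 - d) * y) := by
      rw [← Real.exp_add]; ring_nf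
    have h1 : φ x * Real.exp ((2 - d) * x) ≤ φ y * Real.exp ((2 - d) * y) := by
      calc φ x * Real.exp ((2 - d) * x)
          ≤ φ y * Real.exp ((2 - d) * (y - x)) * Real.exp ((2 - d) * x) :=
            mul_le_mul_of_nonneg_right (hφgrow x y hx hxy) (Real.exp_pos _).le
        _ = φ y * Real.exp ((2 - d) * y) := by rw [mul_assoc, hE]
    have h2 : x⁻¹ * Real.exp ((2 - d) * x) ≤ y⁻¹ * Real.exp ((2 - d) * y) := by
      have hg := hgrow x y hx.le hxy
      calc x⁻¹ * Real.exp ((2 - d) * x)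
          = y / x * (y⁻¹ * Real.exp ((2 - d) * x)) := by
            field_simp
        _ ≤ Real.exp ((2 - d) * (y - x)) * (y⁻¹ * Real.exp ((2 - d) * x)) :=
            mul_le_mul_of_nonneg_right hg (by positivity)
        _ = y⁻¹ * (Real.exp ((2 - d) * (y - x)) * Real.exp ((2 - d) * x)) := by ring
        _ = y⁻¹ * Real.exp ((2 - d) * y) := by rw [hE]
    rw [add_mul, add_mul]
    exact add_le_add h1 h2
  -- antitone condition
  have hanti : AntitoneOn (fun t => εf t ^ (1 / (2 - d)) / t) (Ioo 0 t₁) := by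
    intro s hs t ht hst
    have hxs := hmemt s hs
    have hxt := hmemt t ht
    have hxle : -Real.log t ≤ -Real.log s := by
      have := Real.log_le_log hs.1 hst
      linarith
    have hkey := hF _ _ hxt hxle
    have hts : ∀ u : ℝ, u ∈ Ioo (0:ℝ) t₁ →
        εf u * Real.exp ((2 - d) * (-Real.log u)) = εf u / u ^ (2 - d) := by
      intro u hu
      rw [Real.rpow_def_of_pos hu.1, div_eq_mul_inv, ← Real.exp_neg]
      ring_nf
    have hkey' : εf t / t ^ (2 - d) ≤ εf s / s ^ (2 - d) := by
      rw [← hts t ht, ← hts s hs]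
      exact hkey
    have hp0 : (0:ℝ) ≤ 1 / (2 - d) := by positivity
    have hid : ∀ u : ℝ, u ∈ Ioo (0:ℝ) t₁ →
        (εf u / u ^ (2 - d)) ^ (1 / (2 - d)) = εf u ^ (1 / (2 - d)) / u := by
      intro u hu
      rw [Real.div_rpow (hεfpos u hu).le (Real.rpow_nonneg hu.1.le _)]
      congr 1
      rw [← Real.rpow_mul hu.1.le, mul_one_div, div_self (ne_of_gt hd2'), Real.rpow_one]
    have h1 : (εf t / t ^ (2 - d)) ^ (1 / (2 - d)) ≤ (εf s / s ^ (2 - d)) ^ (1 / (2 - d)) := by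
      apply Real.rpow_le_rpow _ hkey' hp0
      exact div_nonneg (hεfpos t ht).le (Real.rpow_nonneg ht.1.le _)
    rw [hid t ht, hid s hs] at h1
    exact h1
  -- limit of εf
  have htends : Tendsto εf (𝓝[>] (0:ℝ)) (𝓝 0) := by
    have p2 : Tendsto (fun t : ℝ => (-Real.log t)⁻¹) (𝓝[>] (0:ℝ)) (𝓝 0) := by
      have h1 : Tendsto (fun t : ℝ => -Real.log t) (𝓝[>] (0:ℝ)) atTop :=
        tendsto_neg_atBot_atTop.comp Real.tendsto_log_nhdsGT_zero
      exact h1.inv_tendsto_atTop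
    have p1 : Tendsto (fun t : ℝ => φ (-Real.log t)) (𝓝[>] (0:ℝ)) (𝓝 0) := by
      rw [Metric.tendsto_nhds]
      intro δ hδ
      obtain ⟨X, hXx₂, hX⟩ := hφ0 δ hδ
      have hmem : Ioo (0:ℝ) (Real.exp (-X)) ∈ 𝓝[>] (0:ℝ) :=
        Ioo_mem_nhdsGT_of_mem ⟨le_refl 0, Real.exp_pos _⟩
      filter_upwards [hmem] with t ht
      have hXt : X ≤ -Real.log t := by
        have h := Real.log_lt_log ht.1 ht.2
        rw [Real.log_exp] at h
        linarith
      have hx₂t : x₂ < -Real.log t := lt_of_lt_of_le hXx₂ hXt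
      rw [Real.dist_eq, sub_zero, abs_of_nonneg (hφpos _ hx₂t).le]
      exact lt_of_le_of_lt (hX _ hXt) (by linarith)
    have h := p1.add p2
    rw [add_zero] at h
    exact h
  -- smallness
  have hεfsmall : ∀ α : ℝ, 0 < α → Tendsto (fun t => t ^ α / εf t) (𝓝[>] (0:ℝ)) (𝓝 0) := by
    intro α hα
    have hmem : Ioo (0:ℝ) t₁ ∈ 𝓝[>] (0:ℝ) := Ioo_mem_nhdsGT_of_mem ⟨le_refl 0, ht₁0⟩
    apply tendsto_of_tendsto_of_tendsto_of_le_of_le' tendsto_const_nhds (hsmall α hα)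
    · filter_upwards [hmem] with t ht
      have h1 := hεfpos t ht
      have h2 : (0:ℝ) < t ^ α := Real.rpow_pos_of_pos ht.1 _
      positivity
    · filter_upwards [hmem] with t ht
      have h1 := hεpos t (hsub ht)
      have h2 := hεεf t ht
      have h3 : (0:ℝ) ≤ t ^ α := (Real.rpow_pos_of_pos ht.1 _).le
      exact div_le_div_of_nonneg_left h3 h1 h2
  -- continuity
  have hεfcont : ContinuousOn εf (Ioo 0 t₁) := by
    have hc1 : ContinuousOn (fun t : ℝ => φ (-Real.log t)) (Ioo 0 t₁) := by
      intro t ht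
      have ha : ContinuousAt (fun x : ℝ => -Real.log x) t :=
        (Real.continuousAt_log (ne_of_gt ht.1)).neg
      have hb : ContinuousAt φ (-Real.log t) := hφcontAt _ (hmemt t ht)
      have hc : ContinuousAt (fun s : ℝ => φ (-Real.log s)) t := Filter.Tendsto.comp hb ha
      exact hc.continuousWithinAt
    have hc2 : ContinuousOn (fun t : ℝ => (-Real.log t)⁻¹) (Ioo 0 t₁) := by
      intro t ht
      have h0 : -Real.log t ≠ 0 := ne_of_gt (lt_trans hx₂pos (hmemt t ht))
      exact (((Real.continuousAt_log (ne_of_gt ht.1)).neg).inv₀ h0).continuousWithinAt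
    exact hc1.add hc2
  exact ⟨t₁, ht₁0, ht₁t₀.le, K, hK0, εf, hεfcont, hεfmono, hεfpos, hεεf, htends,
    hεfsmall, hanti, hεfK⟩
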